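/- For a WF poset P, the supremum over non-empty chains C of P of the heights h(C) is at most h(P). Moreover, if P is a WPO, this supremum is attained and equals h(P): there exists a chain C of P with h(C) = h(P). -/

import Mathlib

universe u

open Ordinal

/-- The rank of a well-founded relation: the least ordinal `γ` admitting a
strictly `r`-decreasing... i.e. `r a b → f a < f b`; equals `sup (rank a + 1)`. -/
noncomputable def relRank {β : Type u} (r : β → β → Prop) : Ordinal.{u} :=
  haveI := Classical.propDecidable (WellFounded r)
  if h : WellFounded r then ⨆ a : β, Order.succ ((h.apply a).rank) else 0

/-- `extRel T s t` : `s` strictly extends `t` (both in tree `T`). -/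
def extRel {α : Type u} (T : Set (List α)) (s t : T) : Prop :=
  t.1 <+: s.1 ∧ t.1 ≠ s.1

/-- Rank of a tree of finite sequences ordered by the initial segment relation. -/
noncomputable def treeRank {α : Type u} (T : Set (List α)) : Ordinal.{u} :=
  relRank (extRel T)

/-- Non-empty finite sequences of pairwise incomparable elements. -/
def IncSeqs (P : Type u) [Preorder P] : Set (List P) :=
  {l | l ≠ [] ∧ l.Pairwise fun x y => ¬ x ≤ y ∧ ¬ y ≤ x}

/-- Non-empty strictly descending finite sequences. -/
def DecSeqs (P : Type u) [Preorder P] : Set (List P) :=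
  {l | l ≠ [] ∧ l.Pairwise fun x y => y < x}

/-- Non-empty bad sequences. -/
def BadSeqs (P : Type u) [Preorder P] : Set (List P) :=
  {l | l ≠ [] ∧ l.Pairwise fun x y => ¬ x ≤ y}

/-- Width of a FAC (quasi-)order: the rank of its tree of antichain sequences. -/
noncomputable def width (P : Type u) [Preorder P] : Ordinal.{u} := treeRank (IncSeqs P)

/-- Height: the rank of the tree of strictly descending sequences. -/
noncomputable def height (P : Type u) [Preorder P] : Ordinal.{u} := treeRank (DecSeqs P)

/-- Maximal order type: the rank of the tree of bad sequences. -/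
noncomputable def mot (P : Type u) [Preorder P] : Ordinal.{u} := treeRank (BadSeqs P)

/-- Finite antichain condition. -/
def FAC (P : Type u) [Preorder P] : Prop :=
  ∀ A : Set P, IsAntichain (· ≤ ·) A → A.Finite

/-- Well quasi-order: every infinite sequence is good. -/
def IsWQO (P : Type u) [Preorder P] : Prop :=
  ∀ f : ℕ → P, ∃ i j : ℕ, i < j ∧ f i ≤ f j

/-- Well partial order. -/
def IsWPO (P : Type u) [Preorder P] : Prop :=
  WellFounded ((· < ·) : P → P → Prop) ∧ FAC P

section RankLemmas
variable {α β : Type u} {r : α → α → Prop} {s : β → β → Prop}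

theorem rank_le_map (hs : WellFounded s) (f : α → β)
    (hf : ∀ a b, r a b → s (f a) (f b)) (a : α) (ha : Acc r a) :
    ha.rank ≤ (hs.apply (f a)).rank := by
  induction ha with
  | intro a h ih =>
    rw [Acc.rank_eq]
    apply Ordinal.iSup_le
    rintro ⟨b, hb⟩
    rw [Order.succ_le_iff]
    calc ((Acc.intro a h).inv hb).rank = (h b hb).rank := rfl
      _ ≤ (hs.apply (f b)).rank := ih b hb
      _ = ((hs.apply (f a)).inv (hf b a hb)).rank := rfl
      _ < (hs.apply (f a)).rank := Acc.rank_lt_of_rel _ (hf b a hb)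

theorem relRank_eq (h : WellFounded r) :
    relRank r = ⨆ a : α, Order.succ ((h.apply a).rank) := by
  unfold relRank
  exact dif_pos h

theorem relRank_le_map (hs : WellFounded s) (f : α → β)
    (hf : ∀ a b, r a b → s (f a) (f b)) : relRank r ≤ relRank s := by
  have hr : WellFounded r := Subrelation.wf (fun {a b} h => hf a b h) (InvImage.wf f hs)
  rw [relRank_eq hr, relRank_eq hs]
  apply Ordinal.iSup_le
  intro a
  exact le_trans (Order.succ_le_succ (rank_le_map hs f hf a _))
    (Ordinal.le_iSup (fun b => Order.succ ((hs.apply b).rank)) (f a))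

end RankLemmas

section ListLemmas
variable {P : Type u} [Preorder P]

theorem last_le_of_mem {l : List P} (hp : l.Pairwise fun x y => y < x) :
    ∀ (hne : l ≠ []) (x : P), x ∈ l → l.getLast hne ≤ x := by
  induction l with
  | nil => intro h; exact absurd rfl h
  | cons a t ih =>
    intro hne x hx
    rcases eq_or_ne t ([] : List P) with rfl | ht
    · simp at hx; subst hx; simp
    · rw [List.getLast_cons ht]
      rcases List.mem_cons.1 hx with rfl | hxt
      · exact le_of_lt ((List.pairwise_cons.1 hp).1 _ (List.getLast_mem ht))
      · exact ih (List.pairwise_cons.1 hp).2 ht x hxt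

theorem last_lt_of_extRel {l l' : List P} (hl : l ∈ DecSeqs P) (hl' : l' ∈ DecSeqs P)
    (hpre : l <+: l') (hne : l ≠ l') :
    l'.getLast hl'.1 < l.getLast hl.1 := by
  obtain ⟨t, rfl⟩ := hpre
  have ht : t ≠ [] := by rintro rfl; simp at hne
  rw [List.getLast_append_of_ne_nil _ ht]
  have hp := hl'.2
  rw [List.pairwise_append] at hp
  exact lt_of_lt_of_le (hp.2.2 _ (List.getLast_mem hl.1) _ (List.getLast_mem ht))
    (last_le_of_mem hl.2 hl.1 _ (List.getLast_mem hl.1))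

theorem append_mem_DecSeqs {l : List P} (hl : l ∈ DecSeqs P) {b : P}
    (hb : b < l.getLast hl.1) : l ++ [b] ∈ DecSeqs P := by
  refine ⟨by simp, ?_⟩
  rw [List.pairwise_append]
  refine ⟨hl.2, List.pairwise_singleton _ _, ?_⟩
  intro x hx y hy
  simp at hy; subst hy
  exact lt_of_lt_of_le hb (last_le_of_mem hl.2 hl.1 x hx)

end ListLemmas

section HeightEq
variable {P : Type u} [Preorder P]

/-- The map sending a descending sequence to its last element. -/
def lastMap (P : Type u) [Preorder P] (l : ↥(DecSeqs P)) : P := l.1.getLast l.2.1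

theorem lastMap_rel {l l' : ↥(DecSeqs P)} (h : extRel (DecSeqs P) l' l) :
    lastMap P l' < lastMap P l :=
  last_lt_of_extRel l.2 l'.2 h.1 h.2

theorem extRel_wf (hwf : WellFounded ((· < ·) : P → P → Prop)) :
    WellFounded (extRel (DecSeqs P)) :=
  Subrelation.wf (fun {a b} h => lastMap_rel h) (InvImage.wf (lastMap P) hwf)

theorem singleton_mem_DecSeqs (a : P) : [a] ∈ DecSeqs P :=
  ⟨by simp, List.pairwise_singleton _ _⟩

theorem height_eq (hwf : WellFounded ((· < ·) : P → P → Prop)) :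
    height P = relRank ((· < ·) : P → P → Prop) := by
  have hw2 := extRel_wf hwf
  apply le_antisymm
  · exact relRank_le_map hwf (lastMap P) (fun a b h => lastMap_rel h)
  · rw [relRank_eq hwf, height, treeRank, relRank_eq hw2]
    have key : ∀ a : P, ∀ l : ↥(DecSeqs P), lastMap P l = a →
        (hwf.apply a).rank ≤ (hw2.apply l).rank := by
      intro a
      induction a using WellFounded.induction hwf with
      | _ a ih =>
        rintro l rfl
        rw [Acc.rank_eq]
        apply Ordinal.iSup_le
        rintro ⟨b, hb⟩
        rw [Order.succ_le_iff]
        set l' : ↥(DecSeqs P) := ⟨l.1 ++ [b], append_mem_DecSeqs l.2 hb⟩ with hl'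
        have hrel : extRel (DecSeqs P) l' l :=
          ⟨⟨[b], rfl⟩, fun h => by simpa [hl'] using congrArg List.length h⟩
        have hlast : lastMap P l' = b := List.getLast_append_of_ne_nil _ (by simp)
        calc ((hwf.apply (lastMap P l)).inv hb).rank = (hwf.apply b).rank := rfl
          _ ≤ (hw2.apply l').rank := ih b hb l' hlast
          _ = ((hw2.apply l).inv hrel).rank := rfl
          _ < (hw2.apply l).rank := Acc.rank_lt_of_rel _ hrel
    apply Ordinal.iSup_le
    intro a
    refine le_trans (Order.succ_le_succ (key a ⟨[a], singleton_mem_DecSeqs a⟩ (by simp [lastMap]))) ?_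
    exact Ordinal.le_iSup (fun l : ↥(DecSeqs P) => Order.succ ((hw2.apply l).rank)) _

end HeightEq

section Part2
variable {P : Type u} [PartialOrder P]

/-- Rank of an element under `<`. -/
noncomputable def rnk (hwf : WellFounded ((· < ·) : P → P → Prop)) (x : P) : Ordinal.{u} :=
  (hwf.apply x).rank

theorem rnk_lt_of_lt (hwf : WellFounded ((· < ·) : P → P → Prop)) {x y : P} (h : x < y) :
    rnk hwf x < rnk hwf y :=
  Acc.rank_lt_of_rel _ h

theorem descent (hwf : WellFounded ((· < ·) : P → P → Prop)) :
    ∀ x : P, ∀ β < rnk hwf x, ∃ y, y < x ∧ rnk hwf y = β := by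
  intro x
  induction x using WellFounded.induction hwf with
  | _ x ih =>
    intro β hβ
    rw [show rnk hwf x = _ from (hwf.apply x).rank_eq, Ordinal.lt_iSup_iff] at hβ
    obtain ⟨⟨y, hy⟩, hβy⟩ := hβ
    rw [Order.lt_succ_iff] at hβy
    rcases eq_or_lt_of_le hβy with rfl | h
    · exact ⟨y, hy, rfl⟩
    · obtain ⟨z, hz, hz2⟩ := ih y hy β h
      exact ⟨z, lt_trans hz hy, hz2⟩

theorem attain (hwf : WellFounded ((· < ·) : P → P → Prop)) :
    ∀ α < relRank ((· < ·) : P → P → Prop), ∃ x : P, rnk hwf x = α := by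
  intro α hα
  rw [relRank_eq hwf, Ordinal.lt_iSup_iff] at hα
  obtain ⟨x, hx⟩ := hα
  rw [Order.lt_succ_iff] at hx
  rcases eq_or_lt_of_le hx with rfl | h
  · exact ⟨x, rfl⟩
  · obtain ⟨y, _, hy⟩ := descent hwf x α h
    exact ⟨y, hy⟩

theorem finsetChain (hwf : WellFounded ((· < ·) : P → P → Prop)) (s : Finset Ordinal.{u}) :
    ∀ x : P, (∀ α ∈ s, α ≤ rnk hwf x) →
    ∃ g : Ordinal.{u} → P, (∀ α ∈ s, rnk hwf (g α) = α ∧ g α ≤ x) ∧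
      (∀ α ∈ s, ∀ β ∈ s, α < β → g α < g β) := by
  classical
  induction s using Finset.induction_on_max with
  | empty => exact fun x _ => ⟨fun _ => x, by simp, by simp⟩
  | insert a t hta ih =>
    intro x hx
    have ha : a ≤ rnk hwf x := hx a (Finset.mem_insert_self a t)
    obtain ⟨y, hyx, hy⟩ : ∃ y, y ≤ x ∧ rnk hwf y = a := by
      rcases eq_or_lt_of_le ha with h | h
      · exact ⟨x, le_refl x, h.symm⟩
      · obtain ⟨y, hyx, hy⟩ := descent hwf x a h
        exact ⟨y, le_of_lt hyx, hy⟩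
    obtain ⟨g, hg1, hg2⟩ := ih y (fun α hα => le_of_lt (by rw [hy]; exact hta α hα))
    refine ⟨Function.update g a y, ?_, ?_⟩
    · intro α hα
      rcases Finset.mem_insert.1 hα with rfl | hα2
      · rw [Function.update_self]; exact ⟨hy, hyx⟩
      · rw [Function.update_of_ne (ne_of_lt (hta α hα2))]
        exact ⟨(hg1 α hα2).1, le_trans (hg1 α hα2).2 hyx⟩
    · intro α hα β hβ hab
      rcases Finset.mem_insert.1 hα with rfl | hα2
      · rcases Finset.mem_insert.1 hβ with rfl | hβ2
        · exact absurd hab (lt_irrefl _)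
        · exact absurd hab (asymm (hta β hβ2))
      · rcases Finset.mem_insert.1 hβ with rfl | hβ2
        · rw [Function.update_of_ne (ne_of_lt (hta α hα2)), Function.update_self]
          refine lt_of_le_of_ne (hg1 α hα2).2 ?_
          intro h
          have h2 := (hg1 α hα2).1
          rw [h, hy] at h2
          exact (ne_of_lt (hta α hα2)) h2.symm
        · rw [Function.update_of_ne (ne_of_lt (hta α hα2)),
            Function.update_of_ne (ne_of_lt (hta β hβ2))]
          exact hg2 α hα2 β hβ2 hab

end Part2

section Main
variable {P : Type u} [PartialOrder P]

theorem subtype_lt_wf (hwf : WellFounded ((· < ·) : P → P → Prop)) (S : Set P) :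
    WellFounded ((· < ·) : ↥S → ↥S → Prop) :=
  Subrelation.wf (fun {a b} h => Subtype.coe_lt_coe.2 h) (InvImage.wf Subtype.val hwf)

theorem height_subtype_le (hwf : WellFounded ((· < ·) : P → P → Prop)) (S : Set P) :
    height ↥S ≤ height P := by
  rw [height_eq (subtype_lt_wf hwf S), height_eq hwf]
  exact relRank_le_map hwf Subtype.val (fun a b h => Subtype.coe_lt_coe.2 h)

end Main

/-- For a WF poset the sup of heights of non-empty chains is at
most the height; for a WPO it is attained and equals the height. -/
theorem stmt_8 {P : Type u} [PartialOrder P]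
    (hwf : WellFounded ((· < ·) : P → P → Prop)) :
    (⨆ C : {C : Set P // IsChain (· ≤ ·) C ∧ C.Nonempty}, height ↥(C.1)) ≤ height P ∧
    (FAC P → Nonempty P →
      ∃ C : Set P, IsChain (· ≤ ·) C ∧ C.Nonempty ∧ height ↥C = height P) := by
  classical
  constructor
  · exact Ordinal.iSup_le fun C => height_subtype_le hwf C.1
  · intro hfac hne
    set H := relRank ((· < ·) : P → P → Prop) with hH
    have hPH : height P = H := height_eq hwf
    -- levels
    let I := {o : Ordinal.{u} // o < H}
    let L : I → Set P := fun α => {x | rnk hwf x = α.1}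
    have hLne : ∀ α : I, (L α).Nonempty := fun α => attain hwf α.1 α.2
    have hLfin : ∀ α : I, (L α).Finite := by
      intro α
      apply hfac
      intro x hx y hy hxy hle
      have hlt : x < y := lt_of_le_of_ne hle hxy
      have := rnk_lt_of_lt hwf hlt
      rw [hx, hy] at this
      exact lt_irrefl _ this
    have e : ∀ α : I, ↥(L α) := fun α => ⟨(hLne α).choose, (hLne α).choose_spec⟩
    haveI : ∀ α : I, Finite ↥(L α) := fun α => (hLfin α).to_subtype
    letI : ∀ α : I, TopologicalSpace ↥(L α) := fun _ => ⊥
    haveI : ∀ α : I, DiscreteTopology ↥(L α) := fun _ => ⟨rfl⟩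
    let X := ∀ α : I, ↥(L α)
    let K : I × I → Set X :=
      fun p => {f | p.1.1 < p.2.1 → (f p.1 : P) < (f p.2 : P)}
    have hKcl : ∀ p, IsClosed (K p) := by
      intro p
      have : K p = (fun f : X => (f p.1, f p.2)) ⁻¹'
          {q : ↥(L p.1) × ↥(L p.2) | p.1.1 < p.2.1 → (q.1 : P) < (q.2 : P)} := rfl
      rw [this]
      exact IsClosed.preimage ((continuous_apply p.1).prodMk (continuous_apply p.2))
        (isClosed_discrete _)
    have hFIP : ∀ u : Finset (I × I), (Set.univ ∩ ⋂ p ∈ u, K p).Nonempty := by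
      intro u
      rcases u.eq_empty_or_nonempty with rfl | hu
      · exact ⟨e, Set.mem_univ e, by simp⟩
      · let s : Finset Ordinal.{u} := u.image (fun p => p.1.1) ∪ u.image (fun p => p.2.1)
        have hs1 : ∀ p ∈ u, p.1.1 ∈ s := fun p hp =>
          Finset.mem_union_left _ (Finset.mem_image_of_mem _ hp)
        have hs2 : ∀ p ∈ u, p.2.1 ∈ s := fun p hp =>
          Finset.mem_union_right _ (Finset.mem_image_of_mem _ hp)
        have hsH : ∀ α ∈ s, α < H := by
          intro α hα
          rcases Finset.mem_union.1 hα with h | h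
          · obtain ⟨p, _, rfl⟩ := Finset.mem_image.1 h
            exact p.1.2
          · obtain ⟨p, _, rfl⟩ := Finset.mem_image.1 h
            exact p.2.2
        obtain ⟨q, hq⟩ := hu
        have hm_mem : s.Nonempty := ⟨q.1.1, hs1 q hq⟩
        have hmH : s.max' hm_mem < H := hsH _ (s.max'_mem hm_mem)
        obtain ⟨x, hx⟩ := attain hwf _ hmH
        obtain ⟨g, hg1, hg2⟩ := finsetChain hwf s x
          (fun α hα => by rw [hx]; exact s.le_max' α hα)
        let fu : X := fun α => if h : α.1 ∈ s then ⟨g α.1, (hg1 α.1 h).1⟩ else e α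
        refine ⟨fu, Set.mem_univ _, ?_⟩
        rw [Set.mem_iInter₂]
        intro p hp hlt
        have h1 := hs1 p hp
        have h2 := hs2 p hp
        show (fu p.1 : P) < (fu p.2 : P)
        simp only [fu, dif_pos h1, dif_pos h2]
        exact hg2 _ h1 _ h2 hlt
    obtain ⟨f, -, hf⟩ := isCompact_univ.inter_iInter_nonempty K hKcl hFIP
    have hmono : ∀ α β : I, α.1 < β.1 → (f α : P) < (f β : P) :=
      fun α β h => (Set.mem_iInter.1 hf (α, β)) h
    have h0 : (0 : Ordinal.{u}) < H := by
      obtain ⟨x⟩ := hne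
      refine lt_of_lt_of_le ((zero_le (a := rnk hwf x)).trans_lt (Order.lt_succ _)) ?_
      rw [hH, relRank_eq hwf]
      exact Ordinal.le_iSup (fun b => Order.succ ((hwf.apply b).rank)) x
    refine ⟨Set.range (fun α : I => (f α : P)), ?_, ⟨f ⟨0, h0⟩, ⟨⟨0, h0⟩, rfl⟩⟩, ?_⟩
    · rintro _ ⟨α, rfl⟩ _ ⟨β, rfl⟩ hab
      rcases lt_trichotomy α.1 β.1 with h | h | h
      · exact Or.inl (le_of_lt (hmono α β h))
      · exact absurd (congrArg (fun α : I => (f α : P)) (Subtype.ext h)) hab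
      · exact Or.inr (le_of_lt (hmono β α h))
    · set C : Set P := Set.range (fun α : I => (f α : P)) with hC
      have hCwf := subtype_lt_wf hwf C
      refine le_antisymm (height_subtype_le hwf C) ?_
      rw [hPH, height_eq hCwf, relRank_eq hCwf]; apply ?_
      let elt : I → ↥C := fun α => ⟨(f α : P), ⟨α, rfl⟩⟩
      have keyC : ∀ o : Ordinal.{u}, ∀ ho : o < H, o ≤ (hCwf.apply (elt ⟨o, ho⟩)).rank := by
        intro o
        induction o using Ordinal.induction with
        | _ o ih =>
          intro ho
          apply le_of_forall_lt
          intro c hc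
          have hcH : c < H := lt_trans hc ho
          have hlt : elt ⟨c, hcH⟩ < elt ⟨o, ho⟩ := hmono ⟨c, hcH⟩ ⟨o, ho⟩ hc
          exact lt_of_le_of_lt (ih c hc hcH) (Acc.rank_lt_of_rel _ hlt)
      apply le_of_forall_lt
      intro o ho
      calc o < Order.succ ((hCwf.apply (elt ⟨o, ho⟩)).rank) := Order.lt_succ_iff.2 (keyC o ho)
        _ ≤ ⨆ c : ↥C, Order.succ ((hCwf.apply c).rank) :=
          Ordinal.le_iSup (fun c : ↥C => Order.succ ((hCwf.apply c).rank)) _
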